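/- Let d ≥ 1 be an integer and 0 < β < 1 with 2/β < d < 2(1+β)/β, and let p_t(x) = (4πt)^{−d/2} exp(−‖x‖²/(4t)) be the Gaussian heat kernel on ℝ^d. Fix 0 ≤ u < v < s < t and z > 0, and for T > 0 define U_T(x,r) = z( 𝟙_{[0,s+T]}(r) ∫_{s+T}^{t+T} p_{r'−r}(x) dr' + 𝟙_{(s+T,t+T]}(r) ∫_r^{t+T} p_{r'−r}(x) dr' ) and R(x,r) = 𝟙_{[0,u]}(r) ∫_u^v p_{r'−r}(x) dr' + 𝟙_{(u,v]}(r) ∫_r^v p_{r'−r}(x) dr'. Then there is a constant C > 0 (independent of T) such that for all T ≥ 1: ∫_{ℝ^d} ∫_0^∞ ( (U_T+R)^{1+β} − U_T^{1+β} − R^{1+β} )(x,r) dr dx ≤ C·T^{−d/2}. -/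

import Mathlib

open MeasureTheory
open scoped ENNReal NNReal

/-- The Gaussian heat kernel on `ℝ^d`: `p_t(x) = (4πt)^{−d/2} exp(−‖x‖²/(4t))`. -/
noncomputable def heatKer (d : ℕ) (t : ℝ) (x : EuclideanSpace ℝ (Fin d)) : ℝ :=
  (4 * Real.pi * t) ^ (-(d : ℝ) / 2) * Real.exp (-‖x‖ ^ 2 / (4 * t))

/- ### Auxiliary lemmas -/

lemma aux_exp_neg_le_rpow {s k : ℝ} (hs : 0 < s) (hk : 0 < k) :
    Real.exp (-s) ≤ (k / s) ^ k := by
  rw [Real.rpow_def_of_pos (by positivity), Real.exp_le_exp]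
  have h1 : Real.log (s / k) ≤ s / k - 1 :=
    Real.log_le_sub_one_of_pos (by positivity)
  have h2 : Real.log (k / s) = - Real.log (s / k) := by
    rw [← Real.log_inv]
    congr 1
    field_simp
  have h3 : (s / k - 1) * k = s - k := by field_simp
  have h4 := mul_le_mul_of_nonneg_right h1 hk.le
  rw [h2]
  nlinarith

lemma aux_rpow_add_le {a b p : ℝ} (ha : 0 ≤ a) (hb : 0 ≤ b) (hp : 0 ≤ p) (hp1 : p ≤ 1) :
    (a + b) ^ p ≤ a ^ p + b ^ p := by
  have h := NNReal.rpow_add_le_add_rpow a.toNNReal b.toNNReal hp hp1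
  have h2 := NNReal.coe_le_coe.2 h
  push_cast at h2
  rwa [Real.coe_toNNReal a ha, Real.coe_toNNReal b hb] at h2

/-- The key elementary inequality: `(a+b)^{1+β} − a^{1+β} − b^{1+β} ≤ (1+β) a^β b`. -/
lemma aux_gap_le {β a b : ℝ} (hβ0 : 0 < β) (hβ1 : β ≤ 1) (ha : 0 ≤ a) (hb : 0 ≤ b) :
    (a + b) ^ (1 + β) - a ^ (1 + β) - b ^ (1 + β) ≤ (1 + β) * a ^ β * b := by
  set f : ℝ → ℝ := fun y => (a + y) ^ (1 + β) - y ^ (1 + β) with hf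
  have hp : (1:ℝ) ≤ 1 + β := by linarith
  have hderiv : ∀ y ∈ Set.Icc (0:ℝ) b, HasDerivWithinAt f
      ((fun y : ℝ => (1 + β) * (a + y) ^ β - (1 + β) * y ^ β) y) (Set.Icc (0:ℝ) b) y := by
    intro y _
    have h1 : HasDerivAt (fun y : ℝ => (a + y) ^ (1 + β))
        (1 * (1 + β) * (a + y) ^ (1 + β - 1)) y :=
      ((hasDerivAt_id y).const_add a).rpow_const (Or.inr hp)
    have h2 : HasDerivAt (fun y : ℝ => y ^ (1 + β)) ((1 + β) * y ^ (1 + β - 1)) y :=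
      Real.hasDerivAt_rpow_const (Or.inr hp)
    have h3 := (h1.sub h2).hasDerivWithinAt (s := Set.Icc (0:ℝ) b)
    refine h3.congr_deriv ?_
    simp only [add_sub_cancel_left]
    ring
  have hbound : ∀ y ∈ Set.Icc (0:ℝ) b,
      ‖(fun y : ℝ => (1 + β) * (a + y) ^ β - (1 + β) * y ^ β) y‖ ≤ (1 + β) * a ^ β := by
    intro y hy
    have hy0 : 0 ≤ y := hy.1
    have hsub : (a + y) ^ β ≤ a ^ β + y ^ β := aux_rpow_add_le ha hy0 hβ0.le hβ1
    have hmono : y ^ β ≤ (a + y) ^ β :=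
      Real.rpow_le_rpow hy0 (by linarith) hβ0.le
    simp only [Real.norm_eq_abs]
    rw [abs_of_nonneg (by nlinarith)]
    nlinarith
  have key := Convex.norm_image_sub_le_of_norm_hasDerivWithin_le hderiv hbound
    (convex_Icc _ _) (Set.left_mem_Icc.2 hb) (Set.right_mem_Icc.2 hb)
  have hf0 : f 0 = a ^ (1 + β) := by
    simp [hf, Real.zero_rpow (by positivity : (1:ℝ) + β ≠ 0)]
  have hfb : f b = (a + b) ^ (1 + β) - b ^ (1 + β) := rfl
  have : f b - f 0 ≤ (1 + β) * a ^ β * b := by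
    calc f b - f 0 ≤ ‖f b - f 0‖ := le_abs_self _
      _ ≤ (1 + β) * a ^ β * ‖b - 0‖ := key
      _ = (1 + β) * a ^ β * b := by rw [sub_zero, Real.norm_eq_abs, abs_of_nonneg hb]
  rw [hf0, hfb] at this
  linarith

lemma heatKer_nonneg {d : ℕ} {τ : ℝ} (hτ : 0 ≤ τ) (x : EuclideanSpace ℝ (Fin d)) :
    0 ≤ heatKer d τ x := by
  unfold heatKer
  have : (0:ℝ) ≤ 4 * Real.pi * τ := by positivity
  positivity

lemma heatKer_le_sup {d : ℕ} {τ : ℝ} (hτ : 0 < τ) (x : EuclideanSpace ℝ (Fin d)) :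
    heatKer d τ x ≤ (4 * Real.pi * τ) ^ (-(d : ℝ) / 2) := by
  unfold heatKer
  have h1 : Real.exp (-‖x‖ ^ 2 / (4 * τ)) ≤ 1 := by
    rw [Real.exp_le_one_iff]
    have : (0:ℝ) ≤ ‖x‖ ^ 2 := by positivity
    have h4τ : (0:ℝ) < 4 * τ := by linarith
    rw [div_nonpos_iff]
    right
    constructor <;> nlinarith
  have h2 : (0:ℝ) ≤ (4 * Real.pi * τ) ^ (-(d : ℝ) / 2) :=
    Real.rpow_nonneg (by positivity) _
  calc (4 * Real.pi * τ) ^ (-(d : ℝ) / 2) * Real.exp (-‖x‖ ^ 2 / (4 * τ))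
      ≤ (4 * Real.pi * τ) ^ (-(d : ℝ) / 2) * 1 := by
        exact mul_le_mul_of_nonneg_left h1 h2
    _ = (4 * Real.pi * τ) ^ (-(d : ℝ) / 2) := mul_one _

/-- Pointwise bound on the heat kernel on a bounded time interval:
for `0 < τ ≤ v` and `x ≠ 0`,
`p_τ(x) ≤ (d/π)^{d/2} ‖x‖^{-d} exp(−‖x‖²/(8v))`. -/
lemma heatKer_le_decay {d : ℕ} (hd : 1 ≤ d) {v τ : ℝ} (hv : 0 < v) (hτ : 0 < τ) (hτv : τ ≤ v)
    {x : EuclideanSpace ℝ (Fin d)} (hx : x ≠ 0) :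
    heatKer d τ x ≤ ((d : ℝ) / Real.pi) ^ ((d : ℝ) / 2) * ‖x‖ ^ (-(d : ℝ)) *
      Real.exp (-‖x‖ ^ 2 / (8 * v)) := by
  have hq : (0:ℝ) < ‖x‖ ^ 2 := by
    have : 0 < ‖x‖ := norm_pos_iff.2 hx
    positivity
  have hπ := Real.pi_pos
  have hd0 : (0:ℝ) < (d : ℝ) := by exact_mod_cast hd
  set q : ℝ := ‖x‖ ^ 2 with hqdef
  -- split the exponential
  have hsplit : Real.exp (-q / (4 * τ)) =
      Real.exp (-q / (8 * τ)) * Real.exp (-q / (8 * τ)) := by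
    rw [← Real.exp_add]
    congr 1
    field_simp
    ring
  have hmono : Real.exp (-q / (8 * τ)) ≤ Real.exp (-q / (8 * v)) := by
    rw [Real.exp_le_exp]
    rw [neg_div, neg_div, neg_le_neg_iff]
    apply div_le_div_of_nonneg_left hq.le (by positivity) (by linarith)
  -- the sup bound for the first exponential factor
  have hexp : Real.exp (-(q / (8 * τ))) ≤ (((d:ℝ)/2) / (q / (8 * τ))) ^ ((d:ℝ)/2) :=
    aux_exp_neg_le_rpow (by positivity) (by positivity)
  have harg : ((d:ℝ)/2) / (q / (8 * τ)) = 4 * (d:ℝ) * τ / q := by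
    field_simp
    ring
  -- combine
  have hbase : (0:ℝ) < 4 * Real.pi * τ := by positivity
  have hkey : (4 * Real.pi * τ) ^ (-(d : ℝ) / 2) * (4 * (d:ℝ) * τ / q) ^ ((d:ℝ)/2)
      = ((d : ℝ) / Real.pi) ^ ((d : ℝ) / 2) * ‖x‖ ^ (-(d : ℝ)) := by
    rw [neg_div, Real.rpow_neg hbase.le]
    rw [inv_mul_eq_div, ← Real.div_rpow (by positivity) hbase.le]
    have : 4 * (d:ℝ) * τ / q / (4 * Real.pi * τ) = ((d:ℝ) / Real.pi) * q⁻¹ := by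
      field_simp
    rw [this, Real.mul_rpow (by positivity) (by positivity)]
    congr 1
    rw [Real.inv_rpow hq.le]
    rw [hqdef, ← Real.rpow_natCast ‖x‖ 2, ← Real.rpow_mul (norm_nonneg x),
      ← Real.rpow_neg (norm_nonneg x)]
    congr 1
    push_cast
    ring
  unfold heatKer
  rw [← hqdef, hsplit, ← mul_assoc]
  have h1 : (4 * Real.pi * τ) ^ (-(d : ℝ) / 2) * Real.exp (-q / (8 * τ))
      ≤ ((d : ℝ) / Real.pi) ^ ((d : ℝ) / 2) * ‖x‖ ^ (-(d : ℝ)) := by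
    rw [← hkey]
    apply mul_le_mul_of_nonneg_left _ (Real.rpow_nonneg hbase.le _)
    calc Real.exp (-q / (8 * τ)) = Real.exp (-(q / (8 * τ))) := by rw [neg_div]
      _ ≤ (((d:ℝ)/2) / (q / (8 * τ))) ^ ((d:ℝ)/2) := hexp
      _ = (4 * (d:ℝ) * τ / q) ^ ((d:ℝ)/2) := by rw [harg]
  calc (4 * Real.pi * τ) ^ (-(d : ℝ) / 2) * Real.exp (-q / (8 * τ)) * Real.exp (-q / (8 * τ))
      ≤ (((d : ℝ) / Real.pi) ^ ((d : ℝ) / 2) * ‖x‖ ^ (-(d : ℝ))) * Real.exp (-q / (8 * v)) := by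
        apply mul_le_mul h1 hmono (Real.exp_nonneg _)
        positivity
    _ = ((d : ℝ) / Real.pi) ^ ((d : ℝ) / 2) * ‖x‖ ^ (-(d : ℝ)) * Real.exp (-q / (8 * v)) := by
        ring

/-- Finiteness of `∫_{ball} ‖x‖^{-p}` for `p < d`. -/
lemma aux_finite_sing (d : ℕ) (hd : 1 ≤ d) {p : ℝ} (hp0 : 0 < p) (hpd : p < d) :
    ∫⁻ x : EuclideanSpace ℝ (Fin d) in Metric.ball 0 1,
      ENNReal.ofReal (‖x‖ ^ (-p)) < ∞ := by
  set E := EuclideanSpace ℝ (Fin d)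
  set μ : Measure E := volume.restrict (Metric.ball 0 1)
  have hmeas : Measurable fun x : E => ‖x‖ ^ (-p) :=
    measurable_norm.pow measurable_const
  have hnn : (0:E → ℝ) ≤ᵐ[μ] fun x => ‖x‖ ^ (-p) :=
    Filter.Eventually.of_forall fun x => Real.rpow_nonneg (norm_nonneg _) _
  rw [lintegral_eq_lintegral_meas_le μ hnn hmeas.aemeasurable]
  have hball : volume (Metric.ball (0:E) 1) < ∞ := measure_ball_lt_top
  -- bound the measure of superlevel sets
  have hsub : ∀ t : ℝ, 0 < t →
      {a : E | t ≤ ‖a‖ ^ (-p)} ⊆ Metric.closedBall 0 (t ^ (-p)⁻¹) := by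
    intro t ht a ha
    simp only [Set.mem_setOf_eq] at ha
    have hna : 0 < ‖a‖ := by
      by_contra h
      push_neg at h
      have : ‖a‖ = 0 := le_antisymm h (norm_nonneg _)
      rw [this, Real.zero_rpow (neg_ne_zero.2 hp0.ne')] at ha
      linarith
    rw [Metric.mem_closedBall, dist_zero_right]
    exact (Real.le_rpow_inv_iff_of_neg hna ht (by linarith)).2 ha
  have hfinrank : Module.finrank ℝ E = d := finrank_euclideanSpace_fin
  calc ∫⁻ t in Set.Ioi (0:ℝ), μ {a : E | t ≤ ‖a‖ ^ (-p)}
      ≤ ∫⁻ t in Set.Ioc (0:ℝ) 1 ∪ Set.Ioi (1:ℝ), μ {a : E | t ≤ ‖a‖ ^ (-p)} :=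
        lintegral_mono_set Set.Ioi_subset_Ioc_union_Ioi
    _ ≤ (∫⁻ t in Set.Ioc (0:ℝ) 1, μ {a : E | t ≤ ‖a‖ ^ (-p)}) +
        ∫⁻ t in Set.Ioi (1:ℝ), μ {a : E | t ≤ ‖a‖ ^ (-p)} :=
        lintegral_union_le _ _ _
    _ < ∞ := by
        apply ENNReal.add_lt_top.2
        constructor
        · -- small t : bound by the measure of the unit ball
          calc ∫⁻ t in Set.Ioc (0:ℝ) 1, μ {a : E | t ≤ ‖a‖ ^ (-p)}
              ≤ ∫⁻ _ in Set.Ioc (0:ℝ) 1, volume (Metric.ball (0:E) 1) := by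
                apply setLIntegral_mono' measurableSet_Ioc
                intro t _
                calc μ {a : E | t ≤ ‖a‖ ^ (-p)} ≤ μ Set.univ := measure_mono (Set.subset_univ _)
                  _ = volume (Metric.ball (0:E) 1) := Measure.restrict_apply_univ _
            _ = volume (Metric.ball (0:E) 1) * volume (Set.Ioc (0:ℝ) 1) :=
                setLIntegral_const _ _
            _ < ∞ := by
                apply ENNReal.mul_lt_top hball
                rw [Real.volume_Ioc]
                exact ENNReal.ofReal_lt_top
        · -- large t : superlevel sets are small balls
          have hbd : ∀ t ∈ Set.Ioi (1:ℝ), μ {a : E | t ≤ ‖a‖ ^ (-p)} ≤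
              ENNReal.ofReal (t ^ (-((d:ℝ)/p))) * volume (Metric.ball (0:E) 1) := by
            intro t ht
            have ht1 : (1:ℝ) < t := ht
            have ht0 : (0:ℝ) < t := by linarith
            calc μ {a : E | t ≤ ‖a‖ ^ (-p)}
                ≤ volume (Metric.closedBall (0:E) (t ^ (-p)⁻¹)) := by
                  refine le_trans (Measure.restrict_apply_le _ _) ?_
                  exact measure_mono (hsub t ht0)
              _ = ENNReal.ofReal ((t ^ (-p)⁻¹) ^ Module.finrank ℝ E) *
                    volume (Metric.ball (0:E) 1) :=
                  Measure.addHaar_closedBall _ _ (Real.rpow_nonneg ht0.le _)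
              _ = ENNReal.ofReal (t ^ (-((d:ℝ)/p))) * volume (Metric.ball (0:E) 1) := by
                  congr 2
                  rw [hfinrank, ← Real.rpow_natCast (t ^ (-p)⁻¹) d,
                    ← Real.rpow_mul ht0.le]
                  rw [inv_neg]
                  ring
          calc ∫⁻ t in Set.Ioi (1:ℝ), μ {a : E | t ≤ ‖a‖ ^ (-p)}
              ≤ ∫⁻ t in Set.Ioi (1:ℝ),
                  ENNReal.ofReal (t ^ (-((d:ℝ)/p))) * volume (Metric.ball (0:E) 1) :=
                setLIntegral_mono' measurableSet_Ioi hbd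
            _ = (∫⁻ t in Set.Ioi (1:ℝ), ENNReal.ofReal (t ^ (-((d:ℝ)/p)))) *
                  volume (Metric.ball (0:E) 1) := by
                rw [lintegral_mul_const' _ _ hball.ne]
            _ < ∞ := by
                apply ENNReal.mul_lt_top _ hball
                apply IntegrableOn.setLIntegral_lt_top
                apply integrableOn_Ioi_rpow_of_lt _ one_pos
                rw [neg_lt_neg_iff]
                rw [lt_div_iff₀ hp0] at *
                nlinarith
  done

/-- Finiteness of the Gaussian integral `∫ exp(−c‖x‖²)` over `ℝ^d`. -/
lemma aux_finite_gauss (d : ℕ) {c : ℝ} (hc : 0 < c) :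
    ∫⁻ x : EuclideanSpace ℝ (Fin d), ENNReal.ofReal (Real.exp (-(c * ‖x‖ ^ 2))) < ∞ := by
  have hint : Integrable (fun x : EuclideanSpace ℝ (Fin d) =>
      Real.exp (-(c * ‖x‖ ^ 2))) := by
    have h := (GaussianFourier.integrable_cexp_neg_mul_sq_norm_add (V := EuclideanSpace ℝ (Fin d))
      (b := (c : ℂ)) (by simpa using hc) 0 0).norm
    apply h.congr
    filter_upwards with x
    rw [Complex.norm_exp]
    congr 1
    have : ((‖x‖:ℂ) ^ 2).re = (‖x‖:ℝ) ^ 2 := by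
      rw [← Complex.ofReal_pow, Complex.ofReal_re]
    simp [Complex.add_re, Complex.mul_re, this]
  exact hint.lintegral_lt_top

set_option maxHeartbeats 2000000 in
theorem stmt9 (d : ℕ) (hd : 1 ≤ d) (β : ℝ) (hβ0 : 0 < β) (hβ1 : β < 1)
    (hdim1 : 2 / β < d) (hdim2 : (d : ℝ) < 2 * (1 + β) / β)
    (u v s t z : ℝ) (hu : 0 ≤ u) (huv : u < v) (hvs : v < s) (hst : s < t) (hz : 0 < z)
    (U : ℝ → EuclideanSpace ℝ (Fin d) → ℝ → ℝ)
    (hU : ∀ T x r, U T x r = z *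
      ((Set.Icc (0:ℝ) (s + T)).indicator
          (fun _ => ∫ r' in (s + T)..(t + T), heatKer d (r' - r) x) r +
        (Set.Ioc (s + T) (t + T)).indicator
          (fun _ => ∫ r' in r..(t + T), heatKer d (r' - r) x) r))
    (R : EuclideanSpace ℝ (Fin d) → ℝ → ℝ)
    (hR : ∀ x r, R x r =
      (Set.Icc (0:ℝ) u).indicator (fun _ => ∫ r' in u..v, heatKer d (r' - r) x) r +
        (Set.Ioc u v).indicator (fun _ => ∫ r' in r..v, heatKer d (r' - r) x) r) :
    ∃ C : ℝ, 0 < C ∧ ∀ T : ℝ, 1 ≤ T →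
      ∫⁻ x : EuclideanSpace ℝ (Fin d), ∫⁻ r in Set.Ioi (0:ℝ),
          ENNReal.ofReal
            ((U T x r + R x r) ^ (1 + β) - (U T x r) ^ (1 + β) - (R x r) ^ (1 + β))
        ≤ ENNReal.ofReal (C * T ^ (-(d : ℝ) / 2)) := by
  classical
  have hπ := Real.pi_pos
  have hv0 : 0 < v := lt_of_le_of_lt hu huv
  have hd0 : (0:ℝ) < d := by exact_mod_cast hd
  have hexp_nonpos : -(d:ℝ) / 2 ≤ 0 := by
    have : (0:ℝ) ≤ (d:ℝ) := hd0.le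
    linarith
  set Cd : ℝ := ((d : ℝ) / Real.pi) ^ ((d : ℝ) / 2) with hCd
  have hCd0 : 0 < Cd := Real.rpow_pos_of_pos (by positivity) _
  set B : EuclideanSpace ℝ (Fin d) → ℝ :=
    fun x => Cd * ‖x‖ ^ (-(d:ℝ)) * Real.exp (-‖x‖ ^ 2 / (8 * v)) with hB
  have hB0 : ∀ x, 0 ≤ B x := by
    intro x
    have h1 : (0:ℝ) ≤ ‖x‖ ^ (-(d:ℝ)) := Real.rpow_nonneg (norm_nonneg x) _
    have h2 : (0:ℝ) ≤ Real.exp (-‖x‖ ^ 2 / (8 * v)) := Real.exp_nonneg _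
    exact mul_nonneg (mul_nonneg hCd0.le h1) h2
  -- nonnegativity of R and U
  have ind_nonneg : ∀ (S : Set ℝ) (g : ℝ → ℝ) (r : ℝ), (r ∈ S → 0 ≤ g r) →
      0 ≤ S.indicator g r := by
    intro S g r h
    by_cases hm : r ∈ S
    · rw [Set.indicator_of_mem hm]; exact h hm
    · rw [Set.indicator_of_notMem hm]
  have hRnn : ∀ x r, 0 ≤ R x r := by
    intro x r
    rw [hR]
    apply add_nonneg
    · apply ind_nonneg
      intro hm
      apply intervalIntegral.integral_nonneg (by linarith)
      intro y hy
      exact heatKer_nonneg (by have := hm.2; have := hy.1; linarith) x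
    · apply ind_nonneg
      intro hm
      apply intervalIntegral.integral_nonneg hm.2
      intro y hy
      exact heatKer_nonneg (by have := hy.1; linarith) x
  have hUnn : ∀ T x r, 0 ≤ U T x r := by
    intro T x r
    rw [hU]
    apply mul_nonneg hz.le
    apply add_nonneg
    · apply ind_nonneg
      intro hm
      apply intervalIntegral.integral_nonneg (by linarith)
      intro y hy
      exact heatKer_nonneg (by have := hm.2; have := hy.1; linarith) x
    · apply ind_nonneg
      intro hm
      apply intervalIntegral.integral_nonneg hm.2
      intro y hy
      exact heatKer_nonneg (by have := hy.1; linarith) x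
  -- R vanishes beyond time v
  have hRzero : ∀ x r, v < r → R x r = 0 := by
    intro x r hvr
    have h1 : r ∉ Set.Icc (0:ℝ) u := by
      intro h
      have := h.2
      linarith
    have h2 : r ∉ Set.Ioc u v := by
      intro h
      have := h.2
      linarith
    rw [hR, Set.indicator_of_notMem h1, Set.indicator_of_notMem h2, add_zero]
  -- upper bound for R in terms of B
  have hRle : ∀ x : EuclideanSpace ℝ (Fin d), x ≠ 0 → ∀ r, 0 < r → R x r ≤ v * B x := by
    intro x hx r hr
    rw [hR]
    by_cases h1 : r ∈ Set.Icc (0:ℝ) u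
    · have h2 : r ∉ Set.Ioc u v := fun h => by
        have := h.1; have := h1.2; linarith
      rw [Set.indicator_of_mem h1, Set.indicator_of_notMem h2, add_zero]
      have hbd : ∀ y ∈ Set.uIoc u v, ‖heatKer d (y - r) x‖ ≤ B x := by
        intro y hy
        rw [Set.uIoc_of_le huv.le] at hy
        have hτ : 0 < y - r := by have := hy.1; have := h1.2; linarith
        have hτv : y - r ≤ v := by have := hy.2; linarith
        rw [Real.norm_eq_abs, abs_of_nonneg (heatKer_nonneg hτ.le x)]
        exact heatKer_le_decay hd hv0 hτ hτv hx
      have key := intervalIntegral.norm_integral_le_of_norm_le_const hbd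
      calc (∫ r' in u..v, heatKer d (r' - r) x)
          ≤ ‖∫ r' in u..v, heatKer d (r' - r) x‖ := le_abs_self _
        _ ≤ B x * |v - u| := key
        _ ≤ v * B x := by
            rw [abs_of_nonneg (by linarith)]
            have := hB0 x
            nlinarith
    · by_cases h2 : r ∈ Set.Ioc u v
      · rw [Set.indicator_of_notMem h1, Set.indicator_of_mem h2, zero_add]
        have hbd : ∀ y ∈ Set.uIoc r v, ‖heatKer d (y - r) x‖ ≤ B x := by
          intro y hy
          rw [Set.uIoc_of_le h2.2] at hy
          have hτ : 0 < y - r := by have := hy.1; linarith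
          have hτv : y - r ≤ v := by have := hy.2; linarith
          rw [Real.norm_eq_abs, abs_of_nonneg (heatKer_nonneg hτ.le x)]
          exact heatKer_le_decay hd hv0 hτ hτv hx
        have key := intervalIntegral.norm_integral_le_of_norm_le_const hbd
        calc (∫ r' in r..v, heatKer d (r' - r) x)
            ≤ ‖∫ r' in r..v, heatKer d (r' - r) x‖ := le_abs_self _
          _ ≤ B x * |v - r| := key
          _ ≤ v * B x := by
              rw [abs_of_nonneg (by have := h2.2; linarith)]
              have := hB0 x
              nlinarith [h2.1, hu]
      · rw [Set.indicator_of_notMem h1, Set.indicator_of_notMem h2, add_zero]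
        exact mul_nonneg hv0.le (hB0 x)
  -- upper bound for U on (0, v]
  set K : ℝ := z * (t - s) * (4 * Real.pi) ^ (-(d:ℝ)/2) with hK
  have hK0 : 0 ≤ K :=
    mul_nonneg (mul_nonneg hz.le (by linarith)) (Real.rpow_nonneg (by positivity) _)
  have hUle : ∀ T : ℝ, 1 ≤ T → ∀ x : EuclideanSpace ℝ (Fin d), ∀ r, 0 < r → r ≤ v →
      U T x r ≤ K * T ^ (-(d:ℝ)/2) := by
    intro T hT x r hr hrv
    have hT0 : (0:ℝ) < T := by linarith
    rw [hU]
    have hmem : r ∈ Set.Icc (0:ℝ) (s + T) := ⟨hr.le, by linarith⟩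
    have hnot : r ∉ Set.Ioc (s + T) (t + T) := fun h => by
      have := h.1; linarith
    rw [Set.indicator_of_mem hmem, Set.indicator_of_notMem hnot, add_zero]
    have hbd : ∀ y ∈ Set.uIoc (s + T) (t + T), ‖heatKer d (y - r) x‖ ≤
        (4 * Real.pi * T) ^ (-(d:ℝ)/2) := by
      intro y hy
      rw [Set.uIoc_of_le (by linarith)] at hy
      have hyT : T ≤ y - r := by have := hy.1; linarith
      have hτ : 0 < y - r := by linarith
      rw [Real.norm_eq_abs, abs_of_nonneg (heatKer_nonneg hτ.le x)]
      calc heatKer d (y - r) x ≤ (4 * Real.pi * (y - r)) ^ (-(d:ℝ)/2) :=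
            heatKer_le_sup hτ x
        _ ≤ (4 * Real.pi * T) ^ (-(d:ℝ)/2) :=
            Real.rpow_le_rpow_of_nonpos (by positivity) (by nlinarith) hexp_nonpos
    have key := intervalIntegral.norm_integral_le_of_norm_le_const hbd
    have habs : |t + T - (s + T)| = t - s := by
      rw [abs_of_nonneg (by linarith)]
      ring
    have hsplit : (4 * Real.pi * T) ^ (-(d:ℝ)/2) =
        (4 * Real.pi) ^ (-(d:ℝ)/2) * T ^ (-(d:ℝ)/2) :=
      Real.mul_rpow (by positivity) hT0.le
    calc z * ((∫ r' in (s + T)..(t + T), heatKer d (r' - r) x))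
        ≤ z * ((4 * Real.pi * T) ^ (-(d:ℝ)/2) * |t + T - (s + T)|) := by
          apply mul_le_mul_of_nonneg_left _ hz.le
          exact le_trans (le_abs_self _) key
      _ = K * T ^ (-(d:ℝ)/2) := by
          rw [habs, hsplit, hK]
          ring
  -- the global integrand bound constant
  set M : ℝ≥0∞ := ∫⁻ x : EuclideanSpace ℝ (Fin d), ENNReal.ofReal ((v * B x) ^ β) with hM
  -- finiteness of M
  have hMfin : M < ∞ := by
    have hptwise : ∀ x : EuclideanSpace ℝ (Fin d),
        ENNReal.ofReal ((v * B x) ^ β) ≤ ENNReal.ofReal ((v * Cd) ^ β) *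
          ((Metric.ball (0 : EuclideanSpace ℝ (Fin d)) 1).indicator
              (fun x => ENNReal.ofReal (‖x‖ ^ (-((d:ℝ) * β)))) x +
            ENNReal.ofReal (Real.exp (-(β / (8 * v) * ‖x‖ ^ 2)))) := by
      intro x
      have hrw : (v * B x) ^ β = (v * Cd) ^ β *
          (‖x‖ ^ (-((d:ℝ) * β)) * Real.exp (-(β / (8 * v) * ‖x‖ ^ 2))) := by
        have h1 : v * B x = (v * Cd) * (‖x‖ ^ (-(d:ℝ)) * Real.exp (-‖x‖ ^ 2 / (8 * v))) := by
          rw [hB]; ring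
        rw [h1, Real.mul_rpow (by positivity)
          (mul_nonneg (Real.rpow_nonneg (norm_nonneg x) _) (Real.exp_nonneg _)),
          Real.mul_rpow (Real.rpow_nonneg (norm_nonneg x) _) (Real.exp_nonneg _),
          ← Real.rpow_mul (norm_nonneg x), ← Real.exp_mul]
        congr 2
        · ring
        · field_simp
      rw [hrw, ENNReal.ofReal_mul (Real.rpow_nonneg (by positivity) _)]
      apply mul_le_mul_of_nonneg_left _ (by positivity)
      by_cases hx1 : ‖x‖ < 1
      · rw [Set.indicator_of_mem (mem_ball_zero_iff.2 hx1)]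
        refine le_trans ?_ le_self_add
        apply ENNReal.ofReal_le_ofReal
        have he1 : Real.exp (-(β / (8 * v) * ‖x‖ ^ 2)) ≤ 1 := by
          rw [Real.exp_le_one_iff]
          have : (0:ℝ) ≤ β / (8 * v) * ‖x‖ ^ 2 := by positivity
          linarith
        have := Real.rpow_nonneg (norm_nonneg x) (-((d:ℝ) * β))
        nlinarith
      · refine le_trans ?_ le_add_self
        apply ENNReal.ofReal_le_ofReal
        have hx1' : (1:ℝ) ≤ ‖x‖ := not_lt.1 hx1
        have hr1 : ‖x‖ ^ (-((d:ℝ) * β)) ≤ 1 :=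
          Real.rpow_le_one_of_one_le_of_nonpos hx1' (neg_nonpos.2 (by positivity))
        have := Real.exp_nonneg (-(β / (8 * v) * ‖x‖ ^ 2))
        nlinarith
    have hmeas_ind : Measurable fun x : EuclideanSpace ℝ (Fin d) =>
        (Metric.ball (0 : EuclideanSpace ℝ (Fin d)) 1).indicator
          (fun x => ENNReal.ofReal (‖x‖ ^ (-((d:ℝ) * β)))) x :=
      ((measurable_norm.pow measurable_const).ennreal_ofReal).indicator
        measurableSet_ball
    calc M ≤ ∫⁻ x : EuclideanSpace ℝ (Fin d), ENNReal.ofReal ((v * Cd) ^ β) *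
          ((Metric.ball (0 : EuclideanSpace ℝ (Fin d)) 1).indicator
              (fun x => ENNReal.ofReal (‖x‖ ^ (-((d:ℝ) * β)))) x +
            ENNReal.ofReal (Real.exp (-(β / (8 * v) * ‖x‖ ^ 2)))) :=
          lintegral_mono hptwise
      _ = ENNReal.ofReal ((v * Cd) ^ β) *
          ∫⁻ x : EuclideanSpace ℝ (Fin d),
            ((Metric.ball (0 : EuclideanSpace ℝ (Fin d)) 1).indicator
              (fun x => ENNReal.ofReal (‖x‖ ^ (-((d:ℝ) * β)))) x +
            ENNReal.ofReal (Real.exp (-(β / (8 * v) * ‖x‖ ^ 2)))) :=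
          lintegral_const_mul' _ _ ENNReal.ofReal_ne_top
      _ < ∞ := by
          apply ENNReal.mul_lt_top ENNReal.ofReal_lt_top
          rw [lintegral_add_left hmeas_ind]
          apply ENNReal.add_lt_top.2
          constructor
          · rw [lintegral_indicator measurableSet_ball]
            exact aux_finite_sing d hd (by positivity) (by nlinarith)
          · exact aux_finite_gauss d (by positivity)
  -- almost every point is nonzero
  have hae : ∀ᵐ x : EuclideanSpace ℝ (Fin d),
      x ≠ (0 : EuclideanSpace ℝ (Fin d)) := by
    haveI : Nontrivial (EuclideanSpace ℝ (Fin d)) := by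
      refine ⟨⟨EuclideanSpace.single ⟨0, hd⟩ (1:ℝ), 0, fun h => ?_⟩⟩
      have := congrArg norm h
      rw [EuclideanSpace.norm_single, norm_zero] at this
      norm_num at this
    rw [ae_iff]
    simp only [not_not, Set.setOf_eq_eq_singleton]
    exact measure_singleton _
  -- the final constant
  refine ⟨(1 + β) * K * v * M.toReal + 1, by positivity, fun T hT => ?_⟩
  have hT0 : (0:ℝ) < T := by linarith
  have hTe : (0:ℝ) ≤ T ^ (-(d:ℝ)/2) := Real.rpow_nonneg hT0.le _
  -- pointwise bound for the inner integral at fixed x ≠ 0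
  have hinner : ∀ x : EuclideanSpace ℝ (Fin d), x ≠ 0 →
      (∫⁻ r in Set.Ioi (0:ℝ), ENNReal.ofReal
          ((U T x r + R x r) ^ (1 + β) - (U T x r) ^ (1 + β) - (R x r) ^ (1 + β)))
        ≤ ENNReal.ofReal ((1 + β) * (K * T ^ (-(d:ℝ)/2)) * v) *
            ENNReal.ofReal ((v * B x) ^ β) := by
    intro x hx
    have hpt : ∀ r ∈ Set.Ioi (0:ℝ), ENNReal.ofReal
        ((U T x r + R x r) ^ (1 + β) - (U T x r) ^ (1 + β) - (R x r) ^ (1 + β)) ≤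
        (Set.Ioc (0:ℝ) v).indicator (fun _ => ENNReal.ofReal
          ((1 + β) * (K * T ^ (-(d:ℝ)/2)) * (v * B x) ^ β)) r := by
      intro r hr
      have hr0 : 0 < r := hr
      by_cases hrv : r ≤ v
      · rw [Set.indicator_of_mem (Set.mem_Ioc.2 ⟨hr0, hrv⟩)]
        apply ENNReal.ofReal_le_ofReal
        have hgap : (R x r + U T x r) ^ (1 + β) - (R x r) ^ (1 + β) -
            (U T x r) ^ (1 + β) ≤ (1 + β) * (R x r) ^ β * U T x r :=
          aux_gap_le hβ0 hβ1.le (hRnn x r) (hUnn T x r)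
        have hcomm : (U T x r + R x r) ^ (1 + β) - (U T x r) ^ (1 + β) -
            (R x r) ^ (1 + β) = (R x r + U T x r) ^ (1 + β) - (R x r) ^ (1 + β) -
            (U T x r) ^ (1 + β) := by
          rw [add_comm (U T x r) (R x r)]
          ring
        rw [hcomm]
        refine le_trans hgap ?_
        have h1 : (R x r) ^ β ≤ (v * B x) ^ β :=
          Real.rpow_le_rpow (hRnn x r) (hRle x hx r hr0) hβ0.le
        have h2 : U T x r ≤ K * T ^ (-(d:ℝ)/2) := hUle T hT x r hr0 hrv
        have h3 : (0:ℝ) ≤ (1 + β) * (v * B x) ^ β :=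
          mul_nonneg (by linarith) (Real.rpow_nonneg (mul_nonneg hv0.le (hB0 x)) _)
        calc (1 + β) * (R x r) ^ β * U T x r
            ≤ ((1 + β) * (v * B x) ^ β) * (K * T ^ (-(d:ℝ)/2)) :=
              mul_le_mul (mul_le_mul_of_nonneg_left h1 (by linarith)) h2 (hUnn T x r) h3
          _ = (1 + β) * (K * T ^ (-(d:ℝ)/2)) * (v * B x) ^ β := by ring
      · push_neg at hrv
        rw [hRzero x r hrv]
        have hzero : (U T x r + 0) ^ (1 + β) - (U T x r) ^ (1 + β) -
            (0:ℝ) ^ (1 + β) = 0 := by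
          rw [add_zero, Real.zero_rpow (by positivity : (1:ℝ) + β ≠ 0)]
          ring
        rw [hzero]
        simp
    calc (∫⁻ r in Set.Ioi (0:ℝ), ENNReal.ofReal
          ((U T x r + R x r) ^ (1 + β) - (U T x r) ^ (1 + β) - (R x r) ^ (1 + β)))
        ≤ ∫⁻ r in Set.Ioi (0:ℝ), (Set.Ioc (0:ℝ) v).indicator (fun _ => ENNReal.ofReal
            ((1 + β) * (K * T ^ (-(d:ℝ)/2)) * (v * B x) ^ β)) r :=
          setLIntegral_mono' measurableSet_Ioi hpt
      _ = ENNReal.ofReal ((1 + β) * (K * T ^ (-(d:ℝ)/2)) * (v * B x) ^ β) *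
            (volume.restrict (Set.Ioi (0:ℝ))) (Set.Ioc (0:ℝ) v) := by
          rw [lintegral_indicator measurableSet_Ioc, setLIntegral_const]
      _ = ENNReal.ofReal ((1 + β) * (K * T ^ (-(d:ℝ)/2)) * (v * B x) ^ β) *
            ENNReal.ofReal v := by
          rw [Measure.restrict_apply measurableSet_Ioc,
            Set.inter_eq_left.2 Set.Ioc_subset_Ioi_self, Real.volume_Ioc, sub_zero]
      _ = ENNReal.ofReal ((1 + β) * (K * T ^ (-(d:ℝ)/2)) * v) *
            ENNReal.ofReal ((v * B x) ^ β) := by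
          rw [← ENNReal.ofReal_mul (by positivity), ← ENNReal.ofReal_mul
            (mul_nonneg (mul_nonneg (by linarith) (by positivity)) hv0.le)]
          congr 1
          ring
  -- assemble
  calc (∫⁻ x : EuclideanSpace ℝ (Fin d), ∫⁻ r in Set.Ioi (0:ℝ),
        ENNReal.ofReal
          ((U T x r + R x r) ^ (1 + β) - (U T x r) ^ (1 + β) - (R x r) ^ (1 + β)))
      ≤ ∫⁻ x : EuclideanSpace ℝ (Fin d),
          ENNReal.ofReal ((1 + β) * (K * T ^ (-(d:ℝ)/2)) * v) *
            ENNReal.ofReal ((v * B x) ^ β) := by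
        apply lintegral_mono_ae
        filter_upwards [hae] with x hx
        exact hinner x hx
    _ = ENNReal.ofReal ((1 + β) * (K * T ^ (-(d:ℝ)/2)) * v) * M :=
        lintegral_const_mul' _ _ ENNReal.ofReal_ne_top
    _ ≤ ENNReal.ofReal (((1 + β) * K * v * M.toReal + 1) * T ^ (-(d:ℝ)/2)) := by
        have hrw : ENNReal.ofReal ((1 + β) * (K * T ^ (-(d:ℝ)/2)) * v) * M =
            ENNReal.ofReal ((1 + β) * (K * T ^ (-(d:ℝ)/2)) * v * M.toReal) := by
          conv_lhs => rw [← ENNReal.ofReal_toReal hMfin.ne]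
          rw [← ENNReal.ofReal_mul
            (mul_nonneg (mul_nonneg (by linarith) (mul_nonneg hK0 hTe)) hv0.le)]
        rw [hrw]
        apply ENNReal.ofReal_le_ofReal
        have hM0 : 0 ≤ M.toReal := ENNReal.toReal_nonneg
        nlinarith [mul_nonneg (mul_nonneg (mul_nonneg (by linarith : (0:ℝ) ≤ 1 + β) hK0) hv0.le) hM0]
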